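/- For any even integers k ≥ 2 and m ≥ 2, Σ_{p=0}^{m/2} (m!/((m−2p)!·p!)) · (k/2)^p · f(k, m−2p) = k^{m/2} · m!/(m/2)!, where f(k, r) = (r!/(r/2)!)·(k/2)^{r/2} if r is even and f(k, r) = 0 if r is odd; equivalently this sum equals (2k)^{m/2}·(m−1)!!. -/

import Mathlib

/-- `f(k,r)` for even `k`: the number of ways of completely matching `r` cycles of
length `k` and choosing roots, `f(k,r) = (r!/(r/2)!)·(k/2)^{r/2}` for even `r`,
and `0` for odd `r`. -/
noncomputable def fEven (k r : ℕ) : ℚ :=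
  if Even r then ((r.factorial : ℚ) / ((r / 2).factorial : ℚ)) * ((k : ℚ) / 2) ^ (r / 2)
  else 0

theorem even_moment_sum (k m : ℕ) (hk : Even k) (hm : Even m) (hk2 : 2 ≤ k) (hm2 : 2 ≤ m) :
    (∑ p ∈ Finset.range (m / 2 + 1),
        ((m.factorial : ℚ) / (((m - 2 * p).factorial : ℚ) * (p.factorial : ℚ))) *
          ((k : ℚ) / 2) ^ p * fEven k (m - 2 * p)) =
      (k : ℚ) ^ (m / 2) * (m.factorial : ℚ) / ((m / 2).factorial : ℚ) ∧
    (k : ℚ) ^ (m / 2) * (m.factorial : ℚ) / ((m / 2).factorial : ℚ) =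
      (2 * (k : ℚ)) ^ (m / 2) * ((m - 1).doubleFactorial : ℚ) := by
  obtain ⟨n, hn⟩ := hm
  have hmn : m = 2 * n := by omega
  subst hmn
  have hn1 : 1 ≤ n := by omega
  have hdiv : 2 * n / 2 = n := by omega
  rw [hdiv]
  constructor
  · have key : ∀ p ∈ Finset.range (n + 1),
        (((2 * n).factorial : ℚ) / (((2 * n - 2 * p).factorial : ℚ) * (p.factorial : ℚ))) *
          ((k : ℚ) / 2) ^ p * fEven k (2 * n - 2 * p) =
        (((2 * n).factorial : ℚ) / (n.factorial : ℚ)) * (n.choose p : ℚ) * ((k : ℚ) / 2) ^ n := by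
      intro p hp
      have hpn : p ≤ n := by simpa using Finset.mem_range_succ_iff.mp hp
      have h1 : 2 * n - 2 * p = 2 * (n - p) := by omega
      have h2 : Even (2 * n - 2 * p) := ⟨n - p, by omega⟩
      have h3 : (2 * n - 2 * p) / 2 = n - p := by omega
      rw [fEven, if_pos h2, h3]
      have hcast : (n.choose p : ℚ) = (n.factorial : ℚ) / ((p.factorial : ℚ) * ((n - p).factorial : ℚ)) :=
        Nat.cast_choose ℚ hpn
      have hp0 : (p.factorial : ℚ) ≠ 0 := Nat.cast_ne_zero.2 p.factorial_ne_zero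
      have hnp0 : ((n - p).factorial : ℚ) ≠ 0 := Nat.cast_ne_zero.2 (n - p).factorial_ne_zero
      have hn0 : (n.factorial : ℚ) ≠ 0 := Nat.cast_ne_zero.2 n.factorial_ne_zero
      have hm0 : ((2 * n - 2 * p).factorial : ℚ) ≠ 0 := Nat.cast_ne_zero.2 (2 * n - 2 * p).factorial_ne_zero
      have hpow : ((k : ℚ) / 2) ^ p * ((k : ℚ) / 2) ^ (n - p) = ((k : ℚ) / 2) ^ n := by
        rw [← pow_add]; congr 1; omega
      rw [hcast, ← hpow]
      field_simp
    rw [Finset.sum_congr rfl key]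
    rw [← Finset.sum_mul, ← Finset.mul_sum]
    have hchoose : (∑ p ∈ Finset.range (n + 1), (n.choose p : ℚ)) = 2 ^ n := by
      rw [← Nat.cast_sum]
      norm_cast
      exact Nat.sum_range_choose n
    rw [hchoose]
    have : ((k : ℚ) / 2) ^ n * 2 ^ n = (k : ℚ) ^ n := by
      rw [div_pow, div_mul_cancel₀]
      positivity
    have hn0 : (n.factorial : ℚ) ≠ 0 := Nat.cast_ne_zero.2 n.factorial_ne_zero
    field_simp
    rw [mul_comm]; exact this
  · have hfac : ((2 * n).factorial : ℚ) = 2 ^ n * (n.factorial : ℚ) * ((2 * n - 1).doubleFactorial : ℚ) := by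
      have h1 : 2 * n = (2 * n - 1) + 1 := by omega
      have := Nat.factorial_eq_mul_doubleFactorial (2 * n - 1)
      rw [← h1] at this
      rw [this]
      have h2 : (2 * n).doubleFactorial = 2 ^ n * n.factorial := Nat.doubleFactorial_two_mul n
      rw [h2]
      push_cast
      ring
    rw [hfac]
    have hn0 : (n.factorial : ℚ) ≠ 0 := Nat.cast_ne_zero.2 n.factorial_ne_zero
    field_simp
    ring
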